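/- Let f : ℝ → ℝ be differentiable with f′(u) > 0 for every u ∈ ℝ, and fix c ∈ ℝ. If μ : [0,∞) → ℝ is a differentiable function satisfying the boundary-layer equation μ′(y) = f(c + μ(y)) − f(c) for all y ≥ 0 and μ is bounded on [0,∞), then μ(y) = 0 for all y ≥ 0. In other words, when f′ > 0 the only bounded solution of the boundary-layer ODE is the zero solution. -/

import Mathlib

lemma aux18 (f : ℝ → ℝ) (hf : Differentiable ℝ f) (hf' : ∀ u : ℝ, 0 < deriv f u)
    (c : ℝ) (μ : ℝ → ℝ)
    (hode : ∀ y : ℝ, 0 ≤ y → HasDerivAt μ (f (c + μ y) - f c) y)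
    (hbd : ∃ K : ℝ, ∀ y : ℝ, 0 ≤ y → |μ y| ≤ K) :
    ∀ y : ℝ, 0 ≤ y → μ y ≤ 0 := by
  obtain ⟨K, hK⟩ := hbd
  have hmono : StrictMono f := strictMono_of_deriv_pos hf'
  by_contra h
  push_neg at h
  obtain ⟨y0, hy0, hpos⟩ := h
  set m := μ y0 with hm
  set δ := f (c + m) - f c with hδdef
  have hδ : 0 < δ := sub_pos.2 (hmono (by linarith))
  -- Step 1: invariance
  have step1 : ∀ y, y0 ≤ y → m ≤ μ y := by
    intro y1 hy1
    by_contra hlt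
    push_neg at hlt
    have hy1' : y0 < y1 := by
      rcases lt_or_eq_of_le hy1 with h | h
      · exact h
      · exfalso; rw [← h] at hlt; exact lt_irrefl _ hlt
    set S := {y ∈ Set.Icc y0 y1 | m ≤ μ y} with hS
    have hScl : IsClosed S := by
      have hcont : ContinuousOn μ (Set.Icc y0 y1) := fun y hy =>
        ((hode y (le_trans hy0 hy.1)).continuousAt).continuousWithinAt
      have := hcont.preimage_isClosed_of_isClosed isClosed_Icc (isClosed_Ici (a := m))
      exact this
    have hSne : S.Nonempty := ⟨y0, ⟨le_rfl, le_of_lt hy1'⟩, le_rfl⟩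
    have hSbdd : BddAbove S := ⟨y1, fun y hy => hy.1.2⟩
    set t := sSup S with htdef
    have htS : t ∈ S := hScl.csSup_mem hSne hSbdd
    have hty0 : y0 ≤ t := htS.1.1
    have hty1 : t < y1 := lt_of_le_of_ne htS.1.2 (by
      intro h; rw [h] at htS; exact absurd htS.2 (not_le.2 hlt))
    have hμt : m ≤ μ t := htS.2
    have ht0 : (0:ℝ) ≤ t := le_trans hy0 hty0
    have hdpos : 0 < f (c + μ t) - f c := by
      have : f (c + m) ≤ f (c + μ t) := hmono.monotone (by linarith)
      linarith
    have hdt := hode t ht0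
    rw [hasDerivAt_iff_tendsto_slope] at hdt
    have h1 : ∀ᶠ z in nhdsWithin t {t}ᶜ, 0 < slope μ t z :=
      hdt.eventually (eventually_gt_nhds hdpos)
    have h2 : ∀ᶠ z in nhdsWithin t (Set.Ioi t), 0 < slope μ t z :=
      h1.filter_mono (nhdsWithin_mono t (fun z hz => ne_of_gt hz))
    have h3 : Set.Ioc t y1 ∈ nhdsWithin t (Set.Ioi t) :=
      Ioc_mem_nhdsGT_of_mem ⟨le_rfl, hty1⟩
    obtain ⟨z, hz1, hz2⟩ := (h2.and (Filter.eventually_of_mem h3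
      (fun z (hz : z ∈ Set.Ioc t y1) => hz))).exists
    have hzt : t < z := hz2.1
    have hμz : m ≤ μ z := by
      rw [slope_def_field] at hz1
      rcases div_pos_iff.mp hz1 with ⟨ha, _⟩ | ⟨_, hb⟩
      · linarith
      · linarith
    have hzS : z ∈ S := ⟨⟨le_trans hty0 (le_of_lt hzt), hz2.2⟩, hμz⟩
    exact absurd (le_csSup hSbdd hzS) (not_le.2 hzt)
  -- Step 2: linear growth
  set ν : ℝ → ℝ := fun y => μ y - δ * y with hν
  have hνmono : MonotoneOn ν (Set.Ici y0) := by
    apply monotoneOn_of_deriv_nonneg (convex_Ici y0)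
    · intro y hy
      exact (((hode y (le_trans hy0 hy)).continuousAt.sub
        ((continuous_const.mul continuous_id).continuousAt)).continuousWithinAt)
    · intro x hx
      rw [interior_Ici] at hx
      have : HasDerivAt ν (f (c + μ x) - f c - δ) x := by
        have h1 := (hode x (le_trans hy0 (le_of_lt hx))).sub
          ((hasDerivAt_id x).const_mul δ)
        have h2 : HasDerivAt ν (f (c + μ x) - f c - δ * 1) x := h1
        rwa [mul_one] at h2
      exact this.differentiableAt.differentiableWithinAt
    · intro x hx
      rw [interior_Ici] at hx
      have hd : HasDerivAt ν (f (c + μ x) - f c - δ) x := by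
        have h1 := (hode x (le_trans hy0 (le_of_lt hx))).sub
          ((hasDerivAt_id x).const_mul δ)
        have h2 : HasDerivAt ν (f (c + μ x) - f c - δ * 1) x := h1
        rwa [mul_one] at h2
      rw [hd.deriv]
      have : f (c + m) ≤ f (c + μ x) := hmono.monotone (by
        have := step1 x (le_of_lt hx); linarith)
      simp only [hδdef]
      linarith
  have hmK : m ≤ K := le_trans (le_abs_self _) (hK y0 hy0)
  set Y := y0 + (K + 1 - m) / δ with hY
  have hq : 0 ≤ (K + 1 - m) / δ := div_nonneg (by linarith) (le_of_lt hδ)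
  have hYge : y0 ≤ Y := by
    show y0 ≤ y0 + (K + 1 - m) / δ
    linarith
  have hνle : ν y0 ≤ ν Y := hνmono Set.self_mem_Ici hYge hYge
  have hμY : K + 1 ≤ μ Y := by
    have hcalc : δ * ((K + 1 - m) / δ) = K + 1 - m := by
      field_simp
    simp only [hν, hY] at hνle
    nlinarith [hνle]
  have := hK Y (le_trans hy0 hYge)
  have := le_abs_self (μ Y)
  linarith

theorem stmt18 (f : ℝ → ℝ) (hf : Differentiable ℝ f) (hf' : ∀ u : ℝ, 0 < deriv f u)
    (c : ℝ) (μ : ℝ → ℝ)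
    (hode : ∀ y : ℝ, 0 ≤ y → HasDerivAt μ (f (c + μ y) - f c) y)
    (hbd : ∃ K : ℝ, ∀ y : ℝ, 0 ≤ y → |μ y| ≤ K) :
    ∀ y : ℝ, 0 ≤ y → μ y = 0 := by
  have h1 := aux18 f hf hf' c μ hode hbd
  have h2 : ∀ y : ℝ, 0 ≤ y → -μ y ≤ 0 := by
    apply aux18 (fun u => -f (-u)) ((hf.comp differentiable_neg).neg)
    · intro u
      have hD : HasDerivAt (fun u : ℝ => -f (-u)) (deriv f (-u)) u := by
        have := (((hf (-u)).hasDerivAt).comp u (hasDerivAt_neg u)).neg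
        have h' : HasDerivAt (fun u : ℝ => -f (-u)) (-(deriv f (-u) * -1)) u := this
        simpa [Function.comp] using h'
      rw [hD.deriv]
      exact hf' (-u)
    · intro y hy
      have h := (hode y hy).neg
      have harg : -(-c + -μ y) = c + μ y := by ring
      have : -(f (c + μ y) - f c) = -f (-(-c + -μ y)) - -f (-(-c)) := by
        rw [harg, neg_neg]; ring
      rw [this] at h
      exact h
    · obtain ⟨K, hK⟩ := hbd
      exact ⟨K, fun y hy => by simpa [abs_neg] using hK y hy⟩
  intro y hy
  have := h2 y hy
  have := h1 y hy
  linarith
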